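/- Let a, b be positive integers with a < b and gcd(a, b) = 1, and let s, k ≥ 0 be integers. If m is an integer with m > g(a, b; s) + k·a, then for all integers j ≥ 0 one has d(m − j·a; a, b) ≥ d(g(a, b; s) + (k − j)·a; a, b). -/

import Mathlib

open Finset

/-- Number of representations of `m` as `∑ i, a i * x i` with nonnegative integers `x i`
(for positive weights `a i`, every solution satisfies `x i ≤ m`). -/
def repCount {k : ℕ} (a : Fin k → ℕ) (m : ℕ) : ℕ :=
  (Finset.univ.filter (fun x : Fin k → Fin (m + 1) => ∑ i, a i * (x i : ℕ) = m)).card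

/-- Representation count extended to the integers (no representations of negative numbers). -/
def repCountZ {k : ℕ} (a : Fin k → ℕ) (m : ℤ) : ℕ :=
  if 0 ≤ m then repCount a m.toNat else 0

/-- The generalized Frobenius number `g(a; s)`: the largest integer having at most `s`
representations by the tuple `a`. -/
noncomputable def genFrob {k : ℕ} (a : Fin k → ℕ) (s : ℕ) : ℤ :=
  sSup {m : ℤ | repCountZ a m ≤ s}

/-- The `n`-th triangular number `t n = n(n+1)/2`. -/
def t (n : ℕ) : ℕ := n * (n + 1) / 2

/-- `N_s^even = 6⌊√(s+1)⌋ - 6`. -/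
def NEven (s : ℕ) : ℤ := 6 * (Nat.sqrt (s + 1) : ℤ) - 6

/-- `N_s^odd = 6⌊(√(4s+5) - 1)/2⌋ - 3`. -/
def NOdd (s : ℕ) : ℤ := 6 * (((Nat.sqrt (4 * s + 5) - 1) / 2 : ℕ) : ℤ) - 3

/-- `δ_s = 1` if `s ≥ ⌊√s⌋² + ⌊√s⌋`, and `0` otherwise. -/
def deltaS (s : ℕ) : ℤ := if Nat.sqrt s ^ 2 + Nat.sqrt s ≤ s then 1 else 0

/-- `q_s = 2⌊√s⌋ + 2 + δ_s`. -/
def qS (s : ℕ) : ℤ := 2 * (Nat.sqrt s : ℤ) + 2 + deltaS s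

/-- `c_s = s - ⌊√s⌋² - δ_s⌊√s⌋`. -/
def cS (s : ℕ) : ℤ := (s : ℤ) - (Nat.sqrt s : ℤ) ^ 2 - deltaS s * (Nat.sqrt s : ℤ)

/-- For `s = k(k+1) + i` with `0 ≤ i ≤ 2k+1`: `x_s^even`. -/
def xEvenN (k i : ℕ) : ℕ := if i ≤ k then i else i - k - 1

/-- For `s = k(k+1) + i` with `0 ≤ i ≤ 2k+1`: `y_s^even`. -/
def yEvenN (k i : ℕ) : ℕ := if i ≤ k then 2 * (k - i) else 4 * k + 3 - 2 * i

/-- For `s = k(k+1) + i` with `0 ≤ i ≤ 2k+1`: `x_s^odd`. -/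
def xOddN (k i : ℕ) : ℕ := if i ≤ k then 2 * i else 2 * (i - k) - 1

/-- For `s = k(k+1) + i` with `0 ≤ i ≤ 2k+1`: `y_s^odd`. -/
def yOddN (k i : ℕ) : ℕ := if i ≤ k then k - i else 2 * k + 1 - i

section Stmt15Aux

/-- Count of `x : ℤ` with `0 ≤ x ≤ n`, `a*x ≤ n`, `b ∣ n - a*x`. -/
noncomputable def Daux (a b : ℕ) (n : ℤ) : ℕ :=
  ((Finset.Icc (0:ℤ) n).filter (fun x => (a:ℤ) * x ≤ n ∧ (b:ℤ) ∣ n - (a:ℤ) * x)).card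

lemma exists_c (a b : ℕ) (hb : 0 < b) (hab : Nat.gcd a b = 1) (n : ℤ) :
    ∃ c : ℤ, 0 ≤ c ∧ c < (b:ℤ) ∧ (b:ℤ) ∣ n - (a:ℤ) * c := by
  have hco : IsCoprime (a:ℤ) (b:ℤ) := by
    rw [Int.isCoprime_iff_gcd_eq_one, Int.gcd_natCast_natCast]; exact hab
  obtain ⟨u, v, huv⟩ := hco
  have hbne : (b:ℤ) ≠ 0 := by exact_mod_cast hb.ne'
  refine ⟨(n * u) % b, Int.emod_nonneg _ hbne, Int.emod_lt_of_pos _ (by exact_mod_cast hb), ?_⟩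
  refine ⟨n * v + (a:ℤ) * ((n * u) / b), ?_⟩
  have h := Int.emod_def (n * u) (b:ℤ)
  rw [h]
  linear_combination (-n) * huv

lemma Dcount (a b : ℕ) (ha : 0 < a) (hb : 0 < b) (hab : Nat.gcd a b = 1)
    (n c : ℤ) (hc0 : 0 ≤ c) (hcb : c < (b:ℤ)) (hd : (b:ℤ) ∣ n - (a:ℤ) * c) :
    Daux a b n = ((n - (a:ℤ) * c) / ((a:ℤ) * b) + 1).toNat := by
  have ha' : (0:ℤ) < a := by exact_mod_cast ha
  have hb' : (0:ℤ) < b := by exact_mod_cast hb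
  have hab' : (0:ℤ) < (a:ℤ) * b := by positivity
  have hco : IsCoprime ((b:ℤ)) ((a:ℤ)) := by
    rw [Int.isCoprime_iff_gcd_eq_one, Int.gcd_natCast_natCast]
    exact (Nat.coprime_comm.mp hab)
  have hmem : ∀ x : ℤ, x ∈ (Finset.Icc (0:ℤ) n).filter
      (fun x => (a:ℤ) * x ≤ n ∧ (b:ℤ) ∣ n - (a:ℤ) * x) →
      ∃ t : ℤ, x - c = (b:ℤ) * t ∧ 0 ≤ t ∧ (a:ℤ)*x = (a:ℤ)*c + ((a:ℤ)*b)*t := by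
    intro x hx
    rw [Finset.mem_filter, Finset.mem_Icc] at hx
    obtain ⟨⟨hx0, hxn⟩, hax, hdx⟩ := hx
    have hdxc : (b:ℤ) ∣ (a:ℤ) * (x - c) := by
      have h : (a:ℤ)*(x - c) = (n - (a:ℤ)*c) - (n - (a:ℤ)*x) := by ring
      rw [h]; exact dvd_sub hd hdx
    obtain ⟨t, ht⟩ := hco.dvd_of_dvd_mul_left hdxc
    refine ⟨t, ht, ?_, by linear_combination (a:ℤ) * ht⟩
    by_contra hneg
    push_neg at hneg
    have h1 : t ≤ -1 := by omega
    have h2 : (b:ℤ) * t ≤ (b:ℤ) * (-1) := by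
      exact mul_le_mul_of_nonneg_left h1 hb'.le
    omega
  rcases lt_or_ge (n - (a:ℤ)*c) 0 with hneg | hpos
  · have h1 : (n - (a:ℤ)*c) / ((a:ℤ)*b) < 0 := Int.ediv_neg_of_neg_of_pos hneg hab'
    have h2 : ((n - (a:ℤ)*c) / ((a:ℤ)*b) + 1).toNat = 0 := by omega
    rw [h2, Daux, Finset.card_eq_zero, Finset.filter_eq_empty_iff]
    intro x hx
    rw [Finset.mem_Icc] at hx
    rintro ⟨hax, hdx⟩
    have := hmem x (by
      rw [Finset.mem_filter, Finset.mem_Icc]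
      exact ⟨hx, hax, hdx⟩)
    obtain ⟨t, ht, ht0, hta⟩ := this
    have : (a:ℤ) * c ≤ (a:ℤ) * x := by nlinarith
    omega
  · rw [Daux]
    rw [Finset.card_nbij' (fun x => (x - c) / (b:ℤ)) (fun t => c + (b:ℤ) * t)
      (t := Finset.Icc (0:ℤ) ((n - (a:ℤ)*c) / ((a:ℤ)*b))) ?_ ?_ ?_ ?_]
    · rw [Int.card_Icc]; ring_nf
    · intro x hx
      obtain ⟨t, ht, ht0, hta⟩ := hmem x hx
      rw [Finset.mem_coe, Finset.mem_filter, Finset.mem_Icc] at hx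
      obtain ⟨⟨hx0, hxn⟩, hax, hdx⟩ := hx
      have htq : (x - c) / (b:ℤ) = t := by
        rw [ht, Int.mul_ediv_cancel_left _ hb'.ne']
      simp only [Finset.mem_coe, Finset.mem_Icc, htq]
      refine ⟨ht0, ?_⟩
      rw [Int.le_ediv_iff_mul_le hab']
      linarith
    · intro t htm
      rw [Finset.mem_coe, Finset.mem_Icc] at htm
      obtain ⟨ht0, htQ⟩ := htm
      have hQ : t * ((a:ℤ)*b) ≤ n - (a:ℤ)*c := (Int.le_ediv_iff_mul_le hab').mp htQ
      have hx0 : 0 ≤ c + (b:ℤ)*t := by nlinarith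
      have hax : (a:ℤ) * (c + (b:ℤ)*t) ≤ n := by nlinarith
      simp only [Finset.mem_coe, Finset.mem_filter, Finset.mem_Icc]
      refine ⟨⟨hx0, by nlinarith⟩, hax, ?_⟩
      have h2 : n - (a:ℤ)*(c + (b:ℤ)*t) = (n - (a:ℤ)*c) - (b:ℤ)*((a:ℤ)*t) := by ring
      rw [h2]
      exact dvd_sub hd ⟨(a:ℤ)*t, rfl⟩
    · intro x hx
      obtain ⟨t, ht, ht0, hta⟩ := hmem x hx
      show c + (b:ℤ) * ((x - c)/(b:ℤ)) = x
      rw [ht, Int.mul_ediv_cancel_left _ hb'.ne']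
      omega
    · intro t htm
      show (c + (b:ℤ)*t - c)/(b:ℤ) = t
      have h3 : c + (b:ℤ)*t - c = (b:ℤ)*t := by ring
      rw [h3, Int.mul_ediv_cancel_left _ hb'.ne']

lemma repCount_eq (a b : ℕ) (ha : 0 < a) (hb : 0 < b) (m : ℕ) :
    repCount ![a, b] m = Daux a b (m : ℤ) := by
  have ha' : (0:ℤ) < a := by exact_mod_cast ha
  have hb' : (0:ℤ) < b := by exact_mod_cast hb
  rw [repCount, Daux]
  rw [Finset.card_nbij'
    (fun x : Fin 2 → Fin (m+1) => ((x 0 : ℕ) : ℤ))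
    (fun z => ![⟨z.toNat % (m+1), Nat.mod_lt _ m.succ_pos⟩,
                ⟨(((m:ℤ) - (a:ℤ) * z) / (b:ℤ)).toNat % (m+1), Nat.mod_lt _ m.succ_pos⟩])
    ?_ ?_ ?_ ?_]
  · intro x hx
    simp only [Finset.mem_coe, Finset.mem_filter, Finset.mem_univ, true_and, Fin.sum_univ_two,
      Matrix.cons_val_zero, Matrix.cons_val_one, Matrix.head_cons] at hx
    simp only [Finset.mem_coe, Finset.mem_filter, Finset.mem_Icc]
    have h1' : (a:ℤ) * ((x 0 : ℕ):ℤ) + (b:ℤ) * ((x 1 : ℕ):ℤ) = (m:ℤ) := by exact_mod_cast hx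
    have h0 : (0:ℤ) ≤ ((x 0 : ℕ):ℤ) := by positivity
    have h1 : (0:ℤ) ≤ ((x 1 : ℕ):ℤ) := by positivity
    have hb1 : (0:ℤ) ≤ (b:ℤ) * ((x 1 : ℕ):ℤ) := by positivity
    refine ⟨⟨h0, by nlinarith⟩, by linarith, ⟨((x 1 : ℕ):ℤ), by linarith⟩⟩
  · intro z hz
    simp only [Finset.mem_coe, Finset.mem_filter, Finset.mem_Icc] at hz
    obtain ⟨⟨hz0, hzm⟩, haz, hdz⟩ := hz
    have hy : (b:ℤ) * (((m:ℤ) - (a:ℤ) * z) / (b:ℤ)) = (m:ℤ) - (a:ℤ) * z :=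
      Int.mul_ediv_cancel' hdz
    set y : ℤ := ((m:ℤ) - (a:ℤ) * z) / (b:ℤ) with hydef
    have hy0 : 0 ≤ y := Int.ediv_nonneg (by linarith) hb'.le
    have hym : y ≤ (m:ℤ) := by nlinarith
    have hzt : z.toNat % (m+1) = z.toNat := Nat.mod_eq_of_lt (by omega)
    have hyt : y.toNat % (m+1) = y.toNat := Nat.mod_eq_of_lt (by omega)
    simp only [Finset.mem_coe, Finset.mem_filter, Finset.mem_univ, true_and, Fin.sum_univ_two,
      Matrix.cons_val_zero, Matrix.cons_val_one, Matrix.head_cons]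
    show a * (z.toNat % (m+1)) + b * (y.toNat % (m+1)) = m
    rw [hzt, hyt]
    have hfin : ((a * z.toNat + b * y.toNat : ℕ) : ℤ) = (m:ℤ) := by
      push_cast [Int.toNat_of_nonneg hz0, Int.toNat_of_nonneg hy0]
      linarith
    exact_mod_cast hfin
  · intro x hx
    simp only [Finset.mem_coe, Finset.mem_filter, Finset.mem_univ, true_and, Fin.sum_univ_two,
      Matrix.cons_val_zero, Matrix.cons_val_one, Matrix.head_cons] at hx
    have h1' : (a:ℤ) * ((x 0 : ℕ):ℤ) + (b:ℤ) * ((x 1 : ℕ):ℤ) = (m:ℤ) := by exact_mod_cast hx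
    funext i
    fin_cases i
    · ext
      show (((x 0 : ℕ):ℤ)).toNat % (m+1) = (x 0 : ℕ)
      rw [Int.toNat_natCast]
      exact Nat.mod_eq_of_lt (x 0).isLt
    · ext
      show (((m:ℤ) - (a:ℤ) * ((x 0 : ℕ):ℤ)) / (b:ℤ)).toNat % (m+1) = (x 1 : ℕ)
      have h2 : (m:ℤ) - (a:ℤ) * ((x 0 : ℕ):ℤ) = (b:ℤ) * ((x 1 : ℕ):ℤ) := by linarith
      rw [h2, Int.mul_ediv_cancel_left _ hb'.ne', Int.toNat_natCast]
      exact Nat.mod_eq_of_lt (x 1).isLt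
  · intro z hz
    simp only [Finset.mem_coe, Finset.mem_filter, Finset.mem_Icc] at hz
    obtain ⟨⟨hz0, hzm⟩, haz, hdz⟩ := hz
    have hzt : z.toNat % (m+1) = z.toNat := Nat.mod_eq_of_lt (by omega)
    show ((((⟨z.toNat % (m+1), Nat.mod_lt _ m.succ_pos⟩ : Fin (m+1)) : ℕ)) : ℤ) = z
    simp only [hzt]
    exact Int.toNat_of_nonneg hz0

lemma repCountZ_eq (a b : ℕ) (ha : 0 < a) (hb : 0 < b) (n : ℤ) :
    repCountZ ![a, b] n = Daux a b n := by
  rw [repCountZ]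
  split_ifs with h
  · rw [repCount_eq a b ha hb, Int.toNat_of_nonneg h]
  · push_neg at h
    rw [Daux]
    rw [Finset.filter_eq_empty_iff.mpr, Finset.card_empty]
    intro x hx
    rw [Finset.mem_Icc] at hx
    omega

lemma key_bound (a b X d : ℤ) (hb : 0 < b) (hX : X ≤ a * b) (hd1 : 1 ≤ d)
    (hdvd : b ∣ X - d) : X - d ≤ a * b - b := by
  obtain ⟨w, hw⟩ := hdvd
  have h1 : b * w < b * a := by nlinarith
  have h2 : w < a := lt_of_mul_lt_mul_left h1 hb.le
  have h3 : b * w ≤ b * (a - 1) := by nlinarith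
  nlinarith

lemma D_lower (a b : ℕ) (ha : 0 < a) (hb : 0 < b) (hab : Nat.gcd a b = 1)
    (n n2 c2 : ℤ) (h2l : -1 ≤ c2) (h2u : c2 < (b:ℤ)) (hd2 : (b:ℤ) ∣ n2 - (a:ℤ) * c2)
    (hn : n2 < n) :
    ((n2 - (a:ℤ) * c2 - ((a:ℤ)*b - b)) / ((a:ℤ)*b) + 1).toNat ≤ Daux a b n := by
  have ha' : (0:ℤ) < a := by exact_mod_cast ha
  have hb' : (0:ℤ) < b := by exact_mod_cast hb
  have hab' : (0:ℤ) < (a:ℤ) * b := by positivity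
  obtain ⟨c1, hc10, hc1b, hd1⟩ := exists_c a b hb hab n
  rw [Dcount a b ha hb hab n c1 hc10 hc1b hd1]
  have key : n2 - (a:ℤ)*c2 - ((a:ℤ)*b - b) ≤ n - (a:ℤ)*c1 := by
    have hX : (a:ℤ) * (c1 - c2) ≤ (a:ℤ)*b := by nlinarith
    have hdvd : (b:ℤ) ∣ ((a:ℤ) * (c1 - c2)) - (n - n2) := by
      have h : (a:ℤ) * (c1 - c2) - (n - n2) = (n2 - (a:ℤ)*c2) - (n - (a:ℤ)*c1) := by ring
      rw [h]; exact dvd_sub hd2 hd1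
    have := key_bound (a:ℤ) (b:ℤ) ((a:ℤ)*(c1-c2)) (n - n2) hb' hX (by omega) hdvd
    linarith
  have := Int.ediv_le_ediv hab' key
  omega

lemma genFrob_eq (a b : ℕ) (ha : 0 < a) (hb : 0 < b) (hab : Nat.gcd a b = 1) (s : ℕ) :
    genFrob ![a, b] s = ((s:ℤ)+1) * ((a:ℤ)*b) - a - b := by
  have ha' : (0:ℤ) < a := by exact_mod_cast ha
  have hb' : (0:ℤ) < b := by exact_mod_cast hb
  have hab' : (0:ℤ) < (a:ℤ) * b := by positivity
  set G : ℤ := ((s:ℤ)+1) * ((a:ℤ)*b) - a - b with hG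
  have hDG : Daux a b G ≤ s := by
    have hc : (b:ℤ) ∣ G - (a:ℤ) * ((b:ℤ) - 1) := ⟨(s:ℤ)*a - 1, by rw [hG]; ring⟩
    rw [Dcount a b ha hb hab G ((b:ℤ)-1) (by omega) (by omega) hc]
    have h1 : G - (a:ℤ)*((b:ℤ)-1) = ((a:ℤ)*b - b) + ((a:ℤ)*b) * ((s:ℤ) - 1) := by
      rw [hG]; ring
    rw [h1, Int.add_mul_ediv_left _ _ hab'.ne',
      Int.ediv_eq_zero_of_lt (by nlinarith) (by nlinarith)]
    omega
  have hub : ∀ n : ℤ, G < n → (s:ℕ) < Daux a b n := by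
    intro n hn
    have hc2 : (b:ℤ) ∣ G - (a:ℤ) * (-1) := ⟨((s:ℤ)+1)*a - 1, by rw [hG]; ring⟩
    have hD := D_lower a b ha hb hab n G (-1) (by omega) (by omega) hc2 hn
    have h2 : G - (a:ℤ)*(-1) - ((a:ℤ)*b - b) = ((a:ℤ)*b) * (s:ℤ) := by rw [hG]; ring
    rw [h2, Int.mul_ediv_cancel_left _ hab'.ne'] at hD
    omega
  rw [genFrob]
  apply le_antisymm
  · apply csSup_le ⟨G, ?_⟩
    · intro n hn
      simp only [Set.mem_setOf_eq, repCountZ_eq a b ha hb] at hn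
      by_contra h
      push_neg at h
      have := hub n h
      omega
    · show repCountZ ![a, b] G ≤ s
      rw [repCountZ_eq a b ha hb]
      exact hDG
  · apply le_csSup ⟨G, ?_⟩ ?_
    · intro n hn
      simp only [Set.mem_setOf_eq, repCountZ_eq a b ha hb] at hn
      by_contra h
      push_neg at h
      have := hub n h
      omega
    · show repCountZ ![a, b] G ≤ s
      rw [repCountZ_eq a b ha hb]
      exact hDG

end Stmt15Aux

/-- for coprime `a < b` and `m > g(a,b;s) + ka`, for all `j ≥ 0`,
`d(m - ja; a, b) ≥ d(g(a,b;s) + (k-j)a; a, b)`. -/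
theorem stmt_15 (a b : ℕ) (ha : 0 < a) (hlt : a < b) (hab : Nat.gcd a b = 1)
    (s k : ℕ) (m : ℤ) (hm : m > genFrob ![a, b] s + (k : ℤ) * a) (j : ℕ) :
    repCountZ ![a, b] (m - (j : ℤ) * a) ≥
      repCountZ ![a, b] (genFrob ![a, b] s + ((k : ℤ) - (j : ℤ)) * a) := by
  have hb : 0 < b := lt_trans ha hlt
  have ha' : (0:ℤ) < a := by exact_mod_cast ha
  have hb' : (0:ℤ) < b := by exact_mod_cast hb
  have hab' : (0:ℤ) < (a:ℤ) * b := by positivity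
  rw [genFrob_eq a b ha hb hab s] at hm ⊢
  rw [repCountZ_eq a b ha hb, repCountZ_eq a b ha hb]
  set G : ℤ := ((s:ℤ)+1) * ((a:ℤ)*b) - a - b with hG
  set r : ℤ := (k:ℤ) - (j:ℤ) with hr
  set q : ℤ := (r - 1) / b with hq
  set c2 : ℤ := (r - 1) % b with hc2def
  have hc2 : c2 = r - 1 - b * q := by rw [hc2def, hq, Int.emod_def]
  have hc20 : 0 ≤ c2 := Int.emod_nonneg _ hb'.ne'
  have hc2b : c2 < (b:ℤ) := Int.emod_lt_of_pos _ hb'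
  have hd2 : (b:ℤ) ∣ (G + r * a) - (a:ℤ) * c2 :=
    ⟨((s:ℤ)+1+q)*a - 1, by rw [hc2, hG]; ring⟩
  have hRHS : Daux a b (G + r*(a:ℤ)) = ((s:ℤ) + 1 + q).toNat := by
    rw [Dcount a b ha hb hab _ c2 hc20 hc2b hd2]
    have h1 : G + r*(a:ℤ) - (a:ℤ)*c2 = ((a:ℤ)*b - b) + ((a:ℤ)*b)*((s:ℤ) + q) := by
      rw [hc2, hG]; ring
    rw [h1, Int.add_mul_ediv_left _ _ hab'.ne',
      Int.ediv_eq_zero_of_lt (by nlinarith) (by nlinarith)]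
    omega
  have hn2n : G + r*(a:ℤ) < m - (j:ℤ)*a := by
    have : m > G + (k:ℤ)*a := hm
    rw [hr]
    linarith
  have hLHS := D_lower a b ha hb hab (m - (j:ℤ)*a) (G + r*(a:ℤ)) c2 (by omega) hc2b hd2 hn2n
  have h2 : G + r*(a:ℤ) - (a:ℤ)*c2 - ((a:ℤ)*b - b) = ((a:ℤ)*b)*((s:ℤ)+q) := by
    rw [hc2, hG]; ring
  rw [h2, Int.mul_ediv_cancel_left _ hab'.ne'] at hLHS
  rw [hRHS]
  omega
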